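/- Unitary invariance: For any bipartite state ρ on ℂ^{d_A} ⊗ ℂ^{d_B} and any unitary matrices U ∈ ℂ^{d_A×d_A}, V ∈ ℂ^{d_B×d_B}, one has ‖M_{α,β}^l((U⊗V) ρ (U⊗V)†)‖_tr = ‖M_{α,β}^l(ρ)‖_tr. -/

import Mathlib

open Matrix
open scoped Kronecker ComplexOrder

/-- Column-stacking vectorization: `vec A (j, i) = A i j`. -/
def vec {m n : Type*} (A : Matrix m n ℂ) : n × m → ℂ := fun p => A p.2 p.1

/-- The realignment map across the bipartition `A | B`. -/
def realign {A B : Type*} (ρ : Matrix (A × B) (A × B) ℂ) :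
    Matrix (A × A) (B × B) ℂ :=
  Matrix.of fun r c => ρ (r.2, c.2) (r.1, c.1)

/-- Partial trace over the first tensor factor. -/
noncomputable def ptrA {A B : Type*} [Fintype A] (ρ : Matrix (A × B) (A × B) ℂ) :
    Matrix B B ℂ :=
  Matrix.of fun i j => ∑ k, ρ (k, i) (k, j)

/-- Partial trace over the second tensor factor. -/
noncomputable def ptrB {A B : Type*} [Fintype B] (ρ : Matrix (A × B) (A × B) ℂ) :
    Matrix A A ℂ :=
  Matrix.of fun i j => ∑ k, ρ (i, k) (j, k)

/-- The trace norm `‖A‖_tr = tr √(Aᴴ A)`, i.e. the sum of singular values. -/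
noncomputable def traceNorm {m n : Type*} [Fintype m] [Fintype n] [DecidableEq n]
    (A : Matrix m n ℂ) : ℝ :=
  (((Matrix.posSemidef_conjTranspose_mul_self A).1.eigenvectorUnitary.1 *
      Matrix.diagonal (((↑) : ℝ → ℂ) ∘ (Real.sqrt ·) ∘ (Matrix.posSemidef_conjTranspose_mul_self A).1.eigenvalues) *
      (star (Matrix.posSemidef_conjTranspose_mul_self A).1.eigenvectorUnitary : Matrix n n ℂ)).trace).re

/-- The matrix `M_{α,β}^l(ρ) = [[αβ E_{l×l}, α ω_l(tr_A ρ)ᵀ],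
[β ω_l(tr_B ρ), R(ρ)]]`. -/
noncomputable def Mblock (α β : ℝ) (l : ℕ) {A B : Type*} [Fintype A] [Fintype B]
    (ρ : Matrix (A × B) (A × B) ℂ) :
    Matrix (Fin l ⊕ A × A) (Fin l ⊕ B × B) ℂ :=
  Matrix.fromBlocks
    (Matrix.of fun _ _ => ((α * β : ℝ) : ℂ))
    (Matrix.of fun _ c => (α : ℂ) * _root_.vec (ptrA ρ) c)
    (Matrix.of fun r _ => (β : ℂ) * _root_.vec (ptrB ρ) r)
    (realign ρ)

section Helpers

lemma kron_conjT {m n p q : Type*} (A : Matrix m n ℂ) (B : Matrix p q ℂ) :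
    (A ⊗ₖ B)ᴴ = Aᴴ ⊗ₖ Bᴴ := by
  ext ⟨i, j⟩ ⟨k, l⟩
  simp [Matrix.conjTranspose_apply, mul_comm]

lemma transpose_conjT {m n : Type*} (M : Matrix m n ℂ) : (Mᵀ)ᴴ = (Mᴴ)ᵀ := by
  ext i j; simp

lemma unitary_transpose {n : Type*} [Fintype n] [DecidableEq n]
    {M : Matrix n n ℂ} (hM : M ∈ Matrix.unitaryGroup n ℂ) :
    Mᵀ ∈ Matrix.unitaryGroup n ℂ := by
  have h1 : Mᴴ * M = 1 := by simpa [Matrix.star_eq_conjTranspose] using (Unitary.mem_iff.mp hM).1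
  have h2 : M * Mᴴ = 1 := by simpa [Matrix.star_eq_conjTranspose] using (Unitary.mem_iff.mp hM).2
  rw [Unitary.mem_iff]
  constructor
  · rw [Matrix.star_eq_conjTranspose, transpose_conjT M,
      ← Matrix.transpose_mul, h2, Matrix.transpose_one]
  · rw [Matrix.star_eq_conjTranspose, transpose_conjT M,
      ← Matrix.transpose_mul, h1, Matrix.transpose_one]

lemma unitary_kron {m n : Type*} [Fintype m] [DecidableEq m] [Fintype n] [DecidableEq n]
    {A : Matrix m m ℂ} {B : Matrix n n ℂ}
    (hA : A ∈ Matrix.unitaryGroup m ℂ) (hB : B ∈ Matrix.unitaryGroup n ℂ) :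
    A ⊗ₖ B ∈ Matrix.unitaryGroup (m × n) ℂ := by
  have hA1 : Aᴴ * A = 1 := by simpa [Matrix.star_eq_conjTranspose] using (Unitary.mem_iff.mp hA).1
  have hA2 : A * Aᴴ = 1 := by simpa [Matrix.star_eq_conjTranspose] using (Unitary.mem_iff.mp hA).2
  have hB1 : Bᴴ * B = 1 := by simpa [Matrix.star_eq_conjTranspose] using (Unitary.mem_iff.mp hB).1
  have hB2 : B * Bᴴ = 1 := by simpa [Matrix.star_eq_conjTranspose] using (Unitary.mem_iff.mp hB).2
  rw [Unitary.mem_iff]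
  constructor
  · rw [Matrix.star_eq_conjTranspose, kron_conjT, ← Matrix.mul_kronecker_mul, hA1, hB1,
      Matrix.one_kronecker_one]
  · rw [Matrix.star_eq_conjTranspose, kron_conjT, ← Matrix.mul_kronecker_mul, hA2, hB2,
      Matrix.one_kronecker_one]

lemma unitary_conj {n : Type*} [Fintype n] [DecidableEq n]
    {M : Matrix n n ℂ} (hM : M ∈ Matrix.unitaryGroup n ℂ) :
    (Mᴴ)ᵀ ∈ Matrix.unitaryGroup n ℂ :=
  unitary_transpose (Unitary.star_mem hM)

lemma unitary_fromBlocks_one {l : ℕ} {n : Type*} [Fintype n] [DecidableEq n]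
    {K : Matrix n n ℂ} (hK : K ∈ Matrix.unitaryGroup n ℂ) :
    Matrix.fromBlocks (1 : Matrix (Fin l) (Fin l) ℂ) 0 0 K
      ∈ Matrix.unitaryGroup (Fin l ⊕ n) ℂ := by
  have hK1 : Kᴴ * K = 1 := by simpa [Matrix.star_eq_conjTranspose] using (Unitary.mem_iff.mp hK).1
  have hK2 : K * Kᴴ = 1 := by simpa [Matrix.star_eq_conjTranspose] using (Unitary.mem_iff.mp hK).2
  rw [Unitary.mem_iff]
  constructor
  · rw [Matrix.star_eq_conjTranspose, Matrix.fromBlocks_conjTranspose]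
    simp [Matrix.fromBlocks_multiply, hK1, ← Matrix.fromBlocks_one]
  · rw [Matrix.star_eq_conjTranspose, Matrix.fromBlocks_conjTranspose]
    simp [Matrix.fromBlocks_multiply, hK2, ← Matrix.fromBlocks_one]

lemma traceNorm_unitary_mul_unitary {m n : Type*} [Fintype m] [Fintype n]
    [DecidableEq m] [DecidableEq n]
    (M : Matrix m n ℂ) (P : Matrix m m ℂ) (Q : Matrix n n ℂ)
    (hP : P ∈ Matrix.unitaryGroup m ℂ) (hQ : Q ∈ Matrix.unitaryGroup n ℂ) :
    traceNorm (P * M * Q) = traceNorm M := by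
  have hA := Matrix.posSemidef_conjTranspose_mul_self M
  have hB := Matrix.posSemidef_conjTranspose_mul_self (P * M * Q)
  have hPh : Pᴴ * P = (1 : Matrix m m ℂ) := by
    simpa [Matrix.star_eq_conjTranspose] using (Unitary.mem_iff.mp hP).1
  have hQQ : Q * Qᴴ = (1 : Matrix n n ℂ) := by
    simpa [Matrix.star_eq_conjTranspose] using (Unitary.mem_iff.mp hQ).2
  have key : (P * M * Q)ᴴ * (P * M * Q) = Qᴴ * (Mᴴ * M) * Q := by
    calc (P * M * Q)ᴴ * (P * M * Q) = Qᴴ * (Mᴴ * ((Pᴴ * P) * (M * Q))) := by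
          simp only [Matrix.conjTranspose_mul, Matrix.mul_assoc]
    _ = Qᴴ * (Mᴴ * M) * Q := by rw [hPh]; simp only [Matrix.one_mul, Matrix.mul_assoc]
  have hch : ((P * M * Q)ᴴ * (P * M * Q)).charpoly = (Mᴴ * M).charpoly := by
    rw [key, Matrix.mul_assoc, Matrix.charpoly_mul_comm, Matrix.mul_assoc, hQQ, Matrix.mul_one]
  have heig := (Matrix.IsHermitian.eigenvalues_eq_eigenvalues_iff hB.1 hA.1).mpr hch
  unfold traceNorm
  rw [Matrix.trace_mul_cycle, Unitary.coe_star_mul_self, Matrix.one_mul,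
    Matrix.trace_mul_cycle, Unitary.coe_star_mul_self, Matrix.one_mul,
    Matrix.trace_diagonal, Matrix.trace_diagonal]
  simp only [heig]

lemma sum_reorder4 {A B : Type*} [Fintype A] [Fintype B] (f : A → B → A → B → ℂ) :
    (∑ x' : A, ∑ y' : B, ∑ x : A, ∑ y : B, f x' y' x y)
      = ∑ y' : B, ∑ y : B, ∑ x' : A, ∑ x : A, f x' y' x y := by
  calc (∑ x' : A, ∑ y' : B, ∑ x : A, ∑ y : B, f x' y' x y)
      = ∑ x' : A, ∑ y' : B, ∑ y : B, ∑ x : A, f x' y' x y :=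
        Finset.sum_congr rfl fun _ _ => Finset.sum_congr rfl fun _ _ => Finset.sum_comm
    _ = ∑ y' : B, ∑ x' : A, ∑ y : B, ∑ x : A, f x' y' x y := Finset.sum_comm
    _ = ∑ y' : B, ∑ y : B, ∑ x' : A, ∑ x : A, f x' y' x y :=
        Finset.sum_congr rfl fun _ _ => Finset.sum_comm

lemma realign_conj {A B : Type*} [Fintype A] [Fintype B]
    (ρ : Matrix (A × B) (A × B) ℂ) (U : Matrix A A ℂ) (V : Matrix B B ℂ) :
    realign ((U ⊗ₖ V) * ρ * (U ⊗ₖ V)ᴴ)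
      = ((Uᴴ)ᵀ ⊗ₖ U) * realign ρ * (((Vᴴ)ᵀ ⊗ₖ V))ᵀ := by
  ext ⟨r1, r2⟩ ⟨c1, c2⟩
  trans (∑ x' : A, ∑ y' : B, ∑ x : A, ∑ y : B,
      U r2 x * V c2 y * ρ (x, y) (x', y') * star (U r1 x') * star (V c1 y'))
  · simp only [realign, Matrix.of_apply, Matrix.mul_apply, Matrix.conjTranspose_apply,
      Matrix.kroneckerMap_apply, Fintype.sum_prod_type, Finset.sum_mul, star_mul']
    refine Finset.sum_congr rfl fun x' _ => Finset.sum_congr rfl fun y' _ =>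
      Finset.sum_congr rfl fun x _ => Finset.sum_congr rfl fun y _ => by ring
  · rw [sum_reorder4 (fun x' y' x y =>
      U r2 x * V c2 y * ρ (x, y) (x', y') * star (U r1 x') * star (V c1 y'))]
    simp only [realign, Matrix.of_apply, Matrix.mul_apply, Matrix.conjTranspose_apply,
      Matrix.transpose_apply, Matrix.kroneckerMap_apply, Fintype.sum_prod_type,
      Finset.sum_mul, star_mul']
    refine Finset.sum_congr rfl fun y' _ => Finset.sum_congr rfl fun y _ =>
      Finset.sum_congr rfl fun x' _ => Finset.sum_congr rfl fun x _ => by ring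

lemma vec_ptrB_eq {A B : Type*} [Fintype A] [Fintype B] [DecidableEq B]
    (ρ : Matrix (A × B) (A × B) ℂ) :
    _root_.vec (ptrB ρ) = (realign ρ) *ᵥ _root_.vec (1 : Matrix B B ℂ) := by
  ext ⟨p1, p2⟩
  simp [_root_.vec, ptrB, realign, Matrix.mulVec, dotProduct, Fintype.sum_prod_type,
    Matrix.one_apply, mul_ite, mul_one, mul_zero]

lemma vec_ptrA_eq {A B : Type*} [Fintype A] [Fintype B] [DecidableEq A]
    (ρ : Matrix (A × B) (A × B) ℂ) :
    _root_.vec (ptrA ρ) = (_root_.vec (1 : Matrix A A ℂ)) ᵥ* realign ρ := by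
  ext ⟨p1, p2⟩
  simp [_root_.vec, ptrA, realign, Matrix.vecMul, dotProduct, Fintype.sum_prod_type,
    Matrix.one_apply, ite_mul, one_mul, zero_mul]

lemma W_mulVec_vec_one {B : Type*} [Fintype B] [DecidableEq B]
    {V : Matrix B B ℂ} (hV : Vᴴ * V = 1) :
    (((Vᴴ)ᵀ ⊗ₖ V))ᵀ *ᵥ _root_.vec (1 : Matrix B B ℂ) = _root_.vec (1 : Matrix B B ℂ) := by
  ext ⟨c1, c2⟩
  have h := congrFun (congrFun hV c1) c2
  simp only [Matrix.mul_apply, Matrix.conjTranspose_apply, Matrix.one_apply] at h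
  simp only [_root_.vec, Matrix.mulVec, dotProduct, Fintype.sum_prod_type, Matrix.transpose_apply,
    Matrix.kroneckerMap_apply, Matrix.conjTranspose_apply, Matrix.one_apply, mul_ite,
    mul_one, mul_zero, Finset.sum_ite_eq, Finset.sum_ite_eq', Finset.mem_univ, if_true]
  simpa [eq_comm] using h

lemma vec_one_vecMul_K {A : Type*} [Fintype A] [DecidableEq A]
    {U : Matrix A A ℂ} (hU : Uᴴ * U = 1) :
    _root_.vec (1 : Matrix A A ℂ) ᵥ* ((Uᴴ)ᵀ ⊗ₖ U) = _root_.vec (1 : Matrix A A ℂ) := by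
  ext ⟨x', x⟩
  have h := congrFun (congrFun hU x') x
  simp only [Matrix.mul_apply, Matrix.conjTranspose_apply, Matrix.one_apply] at h
  simp only [_root_.vec, Matrix.vecMul, dotProduct, Fintype.sum_prod_type, Matrix.transpose_apply,
    Matrix.kroneckerMap_apply, Matrix.conjTranspose_apply, Matrix.one_apply, ite_mul,
    one_mul, zero_mul, Finset.sum_ite_eq, Finset.sum_ite_eq', Finset.mem_univ, if_true]
  simpa [eq_comm] using h

lemma Mblock_factor {dA dB : ℕ} (α β : ℝ) (l : ℕ)
    (ρ : Matrix (Fin dA × Fin dB) (Fin dA × Fin dB) ℂ)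
    (U : Matrix (Fin dA) (Fin dA) ℂ) (V : Matrix (Fin dB) (Fin dB) ℂ)
    (hU1 : Uᴴ * U = 1) (hV1 : Vᴴ * V = 1) :
    Mblock α β l ((U ⊗ₖ V) * ρ * (U ⊗ₖ V)ᴴ)
      = (Matrix.fromBlocks (1 : Matrix (Fin l) (Fin l) ℂ) 0 0 ((Uᴴ)ᵀ ⊗ₖ U) :
            Matrix (Fin l ⊕ Fin dA × Fin dA) (Fin l ⊕ Fin dA × Fin dA) ℂ) * Mblock α β l ρ
          * (Matrix.fromBlocks (1 : Matrix (Fin l) (Fin l) ℂ) 0 0 ((((Vᴴ)ᵀ ⊗ₖ V))ᵀ) :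
            Matrix (Fin l ⊕ Fin dB × Fin dB) (Fin l ⊕ Fin dB × Fin dB) ℂ) := by
  set K := (Uᴴ)ᵀ ⊗ₖ U with hK
  set W := (((Vᴴ)ᵀ ⊗ₖ V))ᵀ with hW
  set σ := (U ⊗ₖ V) * ρ * (U ⊗ₖ V)ᴴ with hσ
  have hR : realign σ = K * realign ρ * W := realign_conj ρ U V
  have hvB : _root_.vec (ptrB σ) = K *ᵥ _root_.vec (ptrB ρ) := by
    rw [vec_ptrB_eq σ, hR, ← Matrix.mulVec_mulVec, ← Matrix.mulVec_mulVec,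
      W_mulVec_vec_one hV1, ← vec_ptrB_eq ρ]
  have hvA : _root_.vec (ptrA σ) = _root_.vec (ptrA ρ) ᵥ* W := by
    rw [vec_ptrA_eq σ, hR, ← Matrix.vecMul_vecMul, ← Matrix.vecMul_vecMul,
      vec_one_vecMul_K hU1, ← vec_ptrA_eq ρ]
  rw [Mblock, Mblock, Matrix.fromBlocks_multiply, Matrix.fromBlocks_multiply]
  simp only [Matrix.mul_one, Matrix.one_mul, Matrix.mul_zero, Matrix.zero_mul,
    add_zero, zero_add]
  refine Matrix.fromBlocks_inj.mpr ⟨rfl, ?_, ?_, ?_⟩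
  · -- top-right block
    ext r c
    simp only [Matrix.mul_apply, Matrix.of_apply, hvA, Matrix.vecMul, dotProduct,
      Finset.mul_sum]
    exact Finset.sum_congr rfl fun c' _ => by ring
  · -- bottom-left block
    ext r c
    simp only [Matrix.mul_apply, Matrix.of_apply, hvB, Matrix.mulVec, dotProduct,
      Finset.mul_sum]
    exact Finset.sum_congr rfl fun r' _ => by ring
  · -- bottom-right block
    rw [hR, Matrix.mul_assoc]

end Helpers

/-- Unitary invariance:
`‖M_{α,β}^l((U⊗V) ρ (U⊗V)ᴴ)‖_tr = ‖M_{α,β}^l(ρ)‖_tr`. -/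
theorem traceNorm_Mblock_local_unitary {dA dB : ℕ} (α β : ℝ) (l : ℕ)
    (ρ : Matrix (Fin dA × Fin dB) (Fin dA × Fin dB) ℂ)
    (U : Matrix (Fin dA) (Fin dA) ℂ) (V : Matrix (Fin dB) (Fin dB) ℂ)
    (hU : U ∈ Matrix.unitaryGroup (Fin dA) ℂ)
    (hV : V ∈ Matrix.unitaryGroup (Fin dB) ℂ) :
    traceNorm (Mblock α β l ((U ⊗ₖ V) * ρ * (U ⊗ₖ V)ᴴ)) =
      traceNorm (Mblock α β l ρ) := by
  have hU1 : Uᴴ * U = 1 := by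
    simpa [Matrix.star_eq_conjTranspose] using (Unitary.mem_iff.mp hU).1
  have hV1 : Vᴴ * V = 1 := by
    simpa [Matrix.star_eq_conjTranspose] using (Unitary.mem_iff.mp hV).1
  rw [Mblock_factor α β l ρ U V hU1 hV1]
  exact traceNorm_unitary_mul_unitary _ _ _
    (unitary_fromBlocks_one (unitary_kron (unitary_conj hU) hU))
    (unitary_fromBlocks_one (unitary_transpose (unitary_kron (unitary_conj hV) hV)))
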